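/- Let T' be a finite tree containing three distinct vertices a, b, v forming a path a–b–v, where a has degree 1 in T' and b has degree 2 in T', and let T be the tree obtained from T' by adding three new vertices u₁, u₂, u₃ with edges u₁u₂, u₂u₃, and vu₁. Then γ₂(T) = γ₂(T') + 2 and α₂(T) = α₂(T') + 2; in particular α₂(T) − γ₂(T) = α₂(T') − γ₂(T'). -/

import Mathlib

open SimpleGraph

/-- `S` is a `k`-dominating set of the subgraph of `G` induced by `U`:
`S ⊆ U` and every vertex of `U` not in `S` has at least `k` neighbors in `S`. -/
def IsKDomOn {V : Type*} (G : SimpleGraph V) (k : ℕ) (U S : Set V) : Prop :=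
  S ⊆ U ∧ ∀ v ∈ U, v ∉ S → k ≤ (G.neighborSet v ∩ S).ncard

/-- `S` is a `k`-independent set of the subgraph of `G` induced by `U`:
`S ⊆ U` and every vertex of `S` has at most `k - 1` neighbors in `S`. -/
def IsKIndOn {V : Type*} (G : SimpleGraph V) (k : ℕ) (U S : Set V) : Prop :=
  S ⊆ U ∧ ∀ v ∈ S, (G.neighborSet v ∩ S).ncard ≤ k - 1

/-- The `k`-domination number of the subgraph of `G` induced by `U`. -/
noncomputable def gammaK {V : Type*} (G : SimpleGraph V) (k : ℕ) (U : Set V) : ℕ :=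
  sInf {n | ∃ S, IsKDomOn G k U S ∧ S.ncard = n}

/-- The `k`-independence number of the subgraph of `G` induced by `U`. -/
noncomputable def alphaK {V : Type*} (G : SimpleGraph V) (k : ℕ) (U : Set V) : ℕ :=
  sSup {n | ∃ S, IsKIndOn G k U S ∧ S.ncard = n}

lemma gammaK_le {V : Type*} {G : SimpleGraph V} {k : ℕ} {S : Set V}
    (h : IsKDomOn G k Set.univ S) : gammaK G k Set.univ ≤ S.ncard :=
  Nat.sInf_le ⟨S, h, rfl⟩

lemma exists_gammaK {V : Type*} (G : SimpleGraph V) (k : ℕ) :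
    ∃ S, IsKDomOn G k Set.univ S ∧ S.ncard = gammaK G k Set.univ :=
  Nat.sInf_mem (⟨Set.univ.ncard, Set.univ,
    ⟨subset_rfl, fun w _ hw => absurd (Set.mem_univ w) hw⟩, rfl⟩ :
    {n | ∃ S, IsKDomOn G k Set.univ S ∧ S.ncard = n}.Nonempty)

lemma alphaK_bdd {V : Type*} [Fintype V] (G : SimpleGraph V) (k : ℕ) :
    BddAbove {n | ∃ S, IsKIndOn G k Set.univ S ∧ S.ncard = n} := by
  refine ⟨Fintype.card V, fun n hn => ?_⟩
  obtain ⟨S, _, rfl⟩ := hn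
  have := Set.ncard_le_ncard (Set.subset_univ S) Set.finite_univ
  simpa [Set.ncard_univ, Nat.card_eq_fintype_card] using this

lemma le_alphaK {V : Type*} [Fintype V] {G : SimpleGraph V} {k : ℕ} {S : Set V}
    (h : IsKIndOn G k Set.univ S) : S.ncard ≤ alphaK G k Set.univ :=
  le_csSup (alphaK_bdd G k) ⟨S, h, rfl⟩

lemma exists_alphaK {V : Type*} [Fintype V] (G : SimpleGraph V) (k : ℕ) :
    ∃ S, IsKIndOn G k Set.univ S ∧ S.ncard = alphaK G k Set.univ :=
  Nat.sSup_mem (⟨0, ∅, ⟨Set.empty_subset _, fun w hw => absurd hw (Set.notMem_empty w)⟩,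
    Set.ncard_empty _⟩ : {n | ∃ S, IsKIndOn G k Set.univ S ∧ S.ncard = n}.Nonempty)
    (alphaK_bdd G k)

lemma ncard_sum_decomp {V W : Type*} [Finite V] [Finite W] (S : Set (V ⊕ W)) :
    S.ncard = (Sum.inl ⁻¹' S).ncard + (Sum.inr ⁻¹' S).ncard := by
  rw [← Set.ncard_image_of_injective (Sum.inl ⁻¹' S) Sum.inl_injective,
    ← Set.ncard_image_of_injective (Sum.inr ⁻¹' S) Sum.inr_injective,
    ← Set.ncard_union_eq (by
      simp [Set.disjoint_left]) (Set.toFinite _) (Set.toFinite _)]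
  congr 1
  ext x
  cases x <;> simp

set_option maxHeartbeats 1000000 in
theorem stmt12 {V : Type*} [Fintype V] (T' : SimpleGraph V) (hT' : T'.IsTree)
    (a b v : V) (hdist : ([a, b, v] : List V).Pairwise (· ≠ ·))
    (hab : T'.Adj a b) (hbv : T'.Adj b v)
    (hda : (T'.neighborSet a).ncard = 1) (hdb : (T'.neighborSet b).ncard = 2)
    (T : SimpleGraph (V ⊕ Fin 3))
    (hadj : ∀ a b, T.Adj a b ↔
      ((∃ x y, T'.Adj x y ∧ a = Sum.inl x ∧ b = Sum.inl y) ∨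
       (a = (Sum.inr 0 : V ⊕ Fin 3) ∧ b = Sum.inr 1) ∨ (a = Sum.inr 1 ∧ b = (Sum.inr 0 : V ⊕ Fin 3)) ∨
       (a = (Sum.inr 1 : V ⊕ Fin 3) ∧ b = Sum.inr 2) ∨ (a = Sum.inr 2 ∧ b = (Sum.inr 1 : V ⊕ Fin 3)) ∨
       (a = Sum.inl v ∧ b = (Sum.inr 0 : V ⊕ Fin 3)) ∨ (a = (Sum.inr 0 : V ⊕ Fin 3) ∧ b = Sum.inl v))) :
    gammaK T 2 Set.univ = gammaK T' 2 Set.univ + 2 ∧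
    alphaK T 2 Set.univ = alphaK T' 2 Set.univ + 2 ∧
    (alphaK T 2 Set.univ : ℤ) - (gammaK T 2 Set.univ : ℤ) =
      (alphaK T' 2 Set.univ : ℤ) - (gammaK T' 2 Set.univ : ℤ) := by
  obtain ⟨⟨hane, hav⟩, hbvne⟩ : (a ≠ b ∧ a ≠ v) ∧ b ≠ v := by
    simpa using hdist
  -- neighbor set descriptions in T
  have NL : ∀ x : V, ∀ w, w ∈ T.neighborSet (Sum.inl x) ↔
      ((∃ y, T'.Adj x y ∧ w = Sum.inl y) ∨ (x = v ∧ w = Sum.inr 0)) := by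
    intro x w
    clear hT' hda hdb hab hbv hdist hane hav hbvne
    rw [mem_neighborSet, hadj]
    constructor
    · rintro (⟨p,q,h1,h2,h3⟩|⟨h1,h2⟩|⟨h1,h2⟩|⟨h1,h2⟩|⟨h1,h2⟩|⟨h1,h2⟩|⟨h1,h2⟩) <;>
        simp_all
    · rintro (⟨y,h1,rfl⟩|⟨rfl,rfl⟩)
      · exact Or.inl ⟨x, y, h1, rfl, rfl⟩
      · tauto
  have N0 : T.neighborSet (Sum.inr 0) = {Sum.inr 1, Sum.inl v} := by
    ext w
    clear hT' hda hdb hab hbv hdist hane hav hbvne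
    rw [mem_neighborSet, hadj]
    constructor
    · rintro (⟨p,q,h1,h2,h3⟩|⟨h1,h2⟩|⟨h1,h2⟩|⟨h1,h2⟩|⟨h1,h2⟩|⟨h1,h2⟩|⟨h1,h2⟩) <;>
        simp_all
    · rintro (rfl|rfl) <;> tauto
  have N1 : T.neighborSet (Sum.inr 1) = {Sum.inr 0, Sum.inr 2} := by
    ext w
    clear hT' hda hdb hab hbv hdist hane hav hbvne
    rw [mem_neighborSet, hadj]
    constructor
    · rintro (⟨p,q,h1,h2,h3⟩|⟨h1,h2⟩|⟨h1,h2⟩|⟨h1,h2⟩|⟨h1,h2⟩|⟨h1,h2⟩|⟨h1,h2⟩) <;>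
        simp_all
    · rintro (rfl|rfl) <;> tauto
  have N2 : T.neighborSet (Sum.inr 2) = {Sum.inr 1} := by
    ext w
    clear hT' hda hdb hab hbv hdist hane hav hbvne
    rw [mem_neighborSet, hadj]
    constructor
    · rintro (⟨p,q,h1,h2,h3⟩|⟨h1,h2⟩|⟨h1,h2⟩|⟨h1,h2⟩|⟨h1,h2⟩|⟨h1,h2⟩|⟨h1,h2⟩) <;>
        simp_all
    · rintro rfl; tauto
  have cardIm : ∀ (A : Set V), ((Sum.inl '' A : Set (V ⊕ Fin 3))).ncard = A.ncard :=
    fun A => Set.ncard_image_of_injective A Sum.inl_injective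
  -- the key intersection identities
  have inter_sup : ∀ (x : V) (S : Set (V ⊕ Fin 3)),
      Sum.inl '' (T'.neighborSet x ∩ Sum.inl ⁻¹' S) ⊆ T.neighborSet (Sum.inl x) ∩ S := by
    rintro x S w ⟨y, ⟨hy1, hy2⟩, rfl⟩
    exact ⟨(NL x _).2 (Or.inl ⟨y, hy1, rfl⟩), hy2⟩
  have inter_ne : ∀ (x : V) (S : Set (V ⊕ Fin 3)), x ≠ v →
      T.neighborSet (Sum.inl x) ∩ S = Sum.inl '' (T'.neighborSet x ∩ Sum.inl ⁻¹' S) := by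
    intro x S hx
    refine subset_antisymm ?_ (inter_sup x S)
    rintro w ⟨hw, hwS⟩
    rcases (NL x w).1 hw with ⟨y, hy, rfl⟩ | ⟨rfl, rfl⟩
    · exact ⟨y, ⟨hy, hwS⟩, rfl⟩
    · exact absurd rfl hx
  have inter_v : ∀ (S : Set (V ⊕ Fin 3)), Sum.inr 0 ∉ S →
      T.neighborSet (Sum.inl v) ∩ S = Sum.inl '' (T'.neighborSet v ∩ Sum.inl ⁻¹' S) := by
    intro S h0
    refine subset_antisymm ?_ (inter_sup v S)
    rintro w ⟨hw, hwS⟩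
    rcases (NL v w).1 hw with ⟨y, hy, rfl⟩ | ⟨-, rfl⟩
    · exact ⟨y, ⟨hy, hwS⟩, rfl⟩
    · exact absurd hwS h0
  have card_inter_ne : ∀ (x : V) (S : Set (V ⊕ Fin 3)), x ≠ v →
      (T.neighborSet (Sum.inl x) ∩ S).ncard = (T'.neighborSet x ∩ Sum.inl ⁻¹' S).ncard := by
    intro x S hx; rw [inter_ne x S hx, cardIm]
  have card_inter_v : ∀ (S : Set (V ⊕ Fin 3)), Sum.inr 0 ∉ S →
      (T.neighborSet (Sum.inl v) ∩ S).ncard = (T'.neighborSet v ∩ Sum.inl ⁻¹' S).ncard := by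
    intro S h0; rw [inter_v S h0, cardIm]
  -- (1) gammaK T ≤ gammaK T' + 2
  have bound1 : gammaK T 2 Set.univ ≤ gammaK T' 2 Set.univ + 2 := by
    obtain ⟨S', hS', hcard'⟩ := exists_gammaK T' 2
    have hdom : IsKDomOn T 2 Set.univ
        (Sum.inl '' S' ∪ {Sum.inr 0, Sum.inr 2}) := by
      refine ⟨Set.subset_univ _, ?_⟩
      rintro (x | i) - hw
      · have hx : x ∉ S' := fun h => hw (Or.inl ⟨x, h, rfl⟩)
        have h2 := hS'.2 x (Set.mem_univ x) hx
        have hsub : Sum.inl '' (T'.neighborSet x ∩ S') ⊆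
            T.neighborSet (Sum.inl x) ∩ (Sum.inl '' S' ∪ {Sum.inr 0, Sum.inr 2}) := by
          rintro w ⟨y, ⟨hy1, hy2⟩, rfl⟩
          exact ⟨(NL x _).2 (Or.inl ⟨y, hy1, rfl⟩), Or.inl ⟨y, hy2, rfl⟩⟩
        calc 2 ≤ (T'.neighborSet x ∩ S').ncard := h2
          _ = (Sum.inl '' (T'.neighborSet x ∩ S')).ncard := (cardIm _).symm
          _ ≤ _ := Set.ncard_le_ncard hsub (Set.toFinite _)
      · fin_cases i
        · exact absurd (Or.inr (Or.inl rfl)) hw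
        · have hsub : ({Sum.inr 0, Sum.inr 2} : Set (V ⊕ Fin 3)) ⊆
              T.neighborSet (Sum.inr 1) ∩ (Sum.inl '' S' ∪ {Sum.inr 0, Sum.inr 2}) := by
            rintro w (rfl | rfl)
            · exact ⟨by rw [N1]; exact Or.inl rfl, Or.inr (Or.inl rfl)⟩
            · exact ⟨by rw [N1]; exact Or.inr rfl, Or.inr (Or.inr rfl)⟩
          calc 2 = ({Sum.inr 0, Sum.inr 2} : Set (V ⊕ Fin 3)).ncard :=
              (Set.ncard_pair (by simp)).symm
            _ ≤ _ := Set.ncard_le_ncard hsub (Set.toFinite _)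
        · exact absurd (Or.inr (Or.inr rfl)) hw
    have hcard : (Sum.inl '' S' ∪ {Sum.inr 0, Sum.inr 2} : Set (V ⊕ Fin 3)).ncard =
        S'.ncard + 2 := by
      rw [Set.ncard_union_eq (by simp [Set.disjoint_left]) (Set.toFinite _) (Set.toFinite _),
        cardIm, Set.ncard_pair (by simp)]
    have := gammaK_le hdom
    omega
  -- (2) alphaK T' + 2 ≤ alphaK T
  have bound2 : alphaK T' 2 Set.univ + 2 ≤ alphaK T 2 Set.univ := by
    obtain ⟨S', hS', hcard'⟩ := exists_alphaK T' 2
    have h0notmem : (Sum.inr 0 : V ⊕ Fin 3) ∉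
        (Sum.inl '' S' ∪ {Sum.inr 1, Sum.inr 2} : Set (V ⊕ Fin 3)) := by
      rintro (⟨y, -, h⟩ | (h | h)) <;> simp_all
    have hind : IsKIndOn T 2 Set.univ (Sum.inl '' S' ∪ {Sum.inr 1, Sum.inr 2}) := by
      refine ⟨Set.subset_univ _, ?_⟩
      rintro w hw
      rcases hw with ⟨x, hx, rfl⟩ | (rfl | rfl)
      · have hsub : T.neighborSet (Sum.inl x) ∩ (Sum.inl '' S' ∪ {Sum.inr 1, Sum.inr 2}) ⊆
            Sum.inl '' (T'.neighborSet x ∩ S') := by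
          rintro w ⟨hw1, hw2⟩
          rcases (NL x w).1 hw1 with ⟨y, hy, rfl⟩ | ⟨-, rfl⟩
          · rcases hw2 with ⟨z, hz, hze⟩ | (h | h)
            · exact ⟨y, ⟨hy, by rwa [← Sum.inl_injective hze]⟩, rfl⟩
            · simp at h
            · simp at h
          · exact absurd hw2 h0notmem
        calc (T.neighborSet (Sum.inl x) ∩ _).ncard
            ≤ (Sum.inl '' (T'.neighborSet x ∩ S')).ncard :=
              Set.ncard_le_ncard hsub (Set.toFinite _)
          _ = (T'.neighborSet x ∩ S').ncard := cardIm _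
          _ ≤ 1 := hS'.2 x hx
      · have hsub : T.neighborSet (Sum.inr 1) ∩ (Sum.inl '' S' ∪ {Sum.inr 1, Sum.inr 2}) ⊆
            {Sum.inr 2} := by
          rw [N1]
          rintro w ⟨(rfl | rfl), hw2⟩
          · exact absurd hw2 h0notmem
          · rfl
        calc _ ≤ ({Sum.inr 2} : Set (V ⊕ Fin 3)).ncard :=
            Set.ncard_le_ncard hsub (Set.toFinite _)
          _ ≤ 1 := by simp
      · have hsub : T.neighborSet (Sum.inr 2) ∩ (Sum.inl '' S' ∪ {Sum.inr 1, Sum.inr 2}) ⊆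
            {Sum.inr 1} := by
          rw [N2]
          exact Set.inter_subset_left
        calc _ ≤ ({Sum.inr 1} : Set (V ⊕ Fin 3)).ncard :=
            Set.ncard_le_ncard hsub (Set.toFinite _)
          _ ≤ 1 := by simp
    have hcard : (Sum.inl '' S' ∪ {Sum.inr 1, Sum.inr 2} : Set (V ⊕ Fin 3)).ncard =
        S'.ncard + 2 := by
      rw [Set.ncard_union_eq (by simp [Set.disjoint_left]) (Set.toFinite _) (Set.toFinite _),
        cardIm, Set.ncard_pair (by simp)]
    have := le_alphaK hind
    omega
  -- (3) gammaK T' + 2 ≤ gammaK T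
  have bound3 : gammaK T' 2 Set.univ + 2 ≤ gammaK T 2 Set.univ := by
    obtain ⟨S, hS, hcard⟩ := exists_gammaK T 2
    have hdecomp := ncard_sum_decomp S
    have h2mem : (Sum.inr 2 : V ⊕ Fin 3) ∈ S := by
      by_contra h
      have h2 := hS.2 (Sum.inr 2) (Set.mem_univ _) h
      have hsub : T.neighborSet (Sum.inr 2) ∩ S ⊆ {Sum.inr 1} := by
        rw [N2]; exact Set.inter_subset_left
      have := Set.ncard_le_ncard hsub (Set.toFinite _)
      rw [Set.ncard_singleton] at this
      omega
    rw [← hcard]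
    by_cases h0 : (Sum.inr 0 : V ⊕ Fin 3) ∈ S
    · by_cases h1 : (Sum.inr 1 : V ⊕ Fin 3) ∈ S
      · -- all three; use S₀ ∪ {v}
        have hpre : (Sum.inr ⁻¹' S : Set (Fin 3)) = Set.univ := by
          ext i
          simp only [Set.mem_univ, iff_true, Set.mem_preimage]
          fin_cases i <;> assumption
        have h3 : (Sum.inr ⁻¹' S : Set (Fin 3)).ncard = 3 := by
          rw [hpre, Set.ncard_univ]; simp
        have hdom : IsKDomOn T' 2 Set.univ (Sum.inl ⁻¹' S ∪ {v}) := by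
          refine ⟨Set.subset_univ _, fun x _ hx => ?_⟩
          have hxS : x ∉ Sum.inl ⁻¹' S := fun h => hx (Or.inl h)
          have hxv : x ≠ v := fun h => hx (Or.inr h)
          have h2 := hS.2 (Sum.inl x) (Set.mem_univ _) hxS
          rw [card_inter_ne x S hxv] at h2
          calc 2 ≤ (T'.neighborSet x ∩ Sum.inl ⁻¹' S).ncard := h2
            _ ≤ _ := Set.ncard_le_ncard
                (Set.inter_subset_inter_right _ Set.subset_union_left) (Set.toFinite _)
        have hg := gammaK_le hdom
        have hc : (Sum.inl ⁻¹' S ∪ {v}).ncard ≤ (Sum.inl ⁻¹' S).ncard + 1 :=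
          le_trans (Set.ncard_union_le _ _) (by simp)
        omega
      · -- inr 0 ∈ S, inr 1 ∉ S, inr 2 ∈ S
        have hpair : ({0, 2} : Set (Fin 3)) ⊆ Sum.inr ⁻¹' S := by
          rintro i (rfl | rfl) <;> assumption
        have h2' : 2 ≤ (Sum.inr ⁻¹' S : Set (Fin 3)).ncard := by
          calc 2 = ({0, 2} : Set (Fin 3)).ncard := (Set.ncard_pair (by decide)).symm
            _ ≤ _ := Set.ncard_le_ncard hpair (Set.toFinite _)
        by_cases hvS : v ∈ Sum.inl ⁻¹' S
        · have hdom : IsKDomOn T' 2 Set.univ (Sum.inl ⁻¹' S) := by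
            refine ⟨Set.subset_univ _, fun x _ hx => ?_⟩
            have hxv : x ≠ v := fun h => hx (h ▸ hvS)
            have h2 := hS.2 (Sum.inl x) (Set.mem_univ _) hx
            rwa [card_inter_ne x S hxv] at h2
          have hg := gammaK_le hdom
          omega
        · -- v ∉ S
          have haS : a ∈ Sum.inl ⁻¹' S := by
            by_contra hA
            have h2 := hS.2 (Sum.inl a) (Set.mem_univ _) hA
            rw [card_inter_ne a S hav] at h2
            have hle : (T'.neighborSet a ∩ Sum.inl ⁻¹' S).ncard ≤ 1 := by
              calc _ ≤ (T'.neighborSet a).ncard :=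
                  Set.ncard_le_ncard Set.inter_subset_left (Set.toFinite _)
                _ = 1 := hda
            omega
          have hNb : T'.neighborSet b = {a, v} := by
            refine (Set.eq_of_subset_of_ncard_le ?_ ?_ (Set.toFinite _)).symm
            · rintro x (rfl | rfl)
              · exact hab.symm
              · exact hbv
            · rw [hdb, Set.ncard_pair hav]
          have hbS : b ∈ Sum.inl ⁻¹' S := by
            by_contra hB
            have h2 := hS.2 (Sum.inl b) (Set.mem_univ _) hB
            rw [card_inter_ne b S hbvne] at h2
            have hsub : T'.neighborSet b ∩ Sum.inl ⁻¹' S ⊆ {a} := by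
              rw [hNb]
              rintro x ⟨(rfl | rfl), hx2⟩
              · rfl
              · exact absurd hx2 hvS
            have := Set.ncard_le_ncard hsub (Set.toFinite _)
            rw [Set.ncard_singleton] at this
            omega
          have hdom : IsKDomOn T' 2 Set.univ ((Sum.inl ⁻¹' S \ {b}) ∪ {v}) := by
            refine ⟨Set.subset_univ _, fun x _ hx => ?_⟩
            have hxv : x ≠ v := fun h => hx (Or.inr h)
            by_cases hxb : x = b
            · subst hxb
              have hsub : ({a, v} : Set V) ⊆
                  T'.neighborSet x ∩ ((Sum.inl ⁻¹' S \ {x}) ∪ {v}) := by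
                rintro y (rfl | rfl)
                · exact ⟨hab.symm, Or.inl ⟨haS, hane⟩⟩
                · exact ⟨hbv, Or.inr rfl⟩
              calc 2 = ({a, v} : Set V).ncard := (Set.ncard_pair hav).symm
                _ ≤ _ := Set.ncard_le_ncard hsub (Set.toFinite _)
            · have hxS : x ∉ Sum.inl ⁻¹' S := fun h => hx (Or.inl ⟨h, hxb⟩)
              have h2x := hS.2 (Sum.inl x) (Set.mem_univ _) hxS
              rw [card_inter_ne x S hxv] at h2x
              have hbnx : b ∉ T'.neighborSet x := by
                intro h
                have : x ∈ T'.neighborSet b := h.symm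
                rw [hNb] at this
                rcases this with rfl | rfl
                · exact hx (Or.inl ⟨haS, hane⟩)
                · exact hxv rfl
              have hsub : T'.neighborSet x ∩ Sum.inl ⁻¹' S ⊆
                  T'.neighborSet x ∩ ((Sum.inl ⁻¹' S \ {b}) ∪ {v}) := by
                rintro y ⟨hy1, hy2⟩
                exact ⟨hy1, Or.inl ⟨hy2, fun h => hbnx (h ▸ hy1)⟩⟩
              calc 2 ≤ (T'.neighborSet x ∩ Sum.inl ⁻¹' S).ncard := h2x
                _ ≤ _ := Set.ncard_le_ncard hsub (Set.toFinite _)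
          have hg := gammaK_le hdom
          have hd : (Sum.inl ⁻¹' S \ {b}).ncard = (Sum.inl ⁻¹' S).ncard - 1 :=
            Set.ncard_diff_singleton_of_mem hbS
          have hc : ((Sum.inl ⁻¹' S \ {b}) ∪ {v}).ncard ≤ (Sum.inl ⁻¹' S \ {b}).ncard + 1 :=
            le_trans (Set.ncard_union_le _ _) (by simp)
          have hpos : 0 < (Sum.inl ⁻¹' S).ncard :=
            (Set.ncard_pos (Set.toFinite _)).2 ⟨b, hbS⟩
          omega
    · -- inr 0 ∉ S
      have h1 : (Sum.inr 1 : V ⊕ Fin 3) ∈ S := by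
        by_contra h1
        have h2 := hS.2 (Sum.inr 1) (Set.mem_univ _) h1
        have hsub : T.neighborSet (Sum.inr 1) ∩ S ⊆ {Sum.inr 2} := by
          rw [N1]
          rintro w ⟨(rfl | rfl), hw2⟩
          · exact absurd hw2 h0
          · rfl
        have := Set.ncard_le_ncard hsub (Set.toFinite _)
        rw [Set.ncard_singleton] at this
        omega
      have hpair : ({1, 2} : Set (Fin 3)) ⊆ Sum.inr ⁻¹' S := by
        rintro i (rfl | rfl) <;> assumption
      have h2' : 2 ≤ (Sum.inr ⁻¹' S : Set (Fin 3)).ncard := by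
        calc 2 = ({1, 2} : Set (Fin 3)).ncard := (Set.ncard_pair (by decide)).symm
          _ ≤ _ := Set.ncard_le_ncard hpair (Set.toFinite _)
      have hdom : IsKDomOn T' 2 Set.univ (Sum.inl ⁻¹' S) := by
        refine ⟨Set.subset_univ _, fun x _ hx => ?_⟩
        by_cases hxv : x = v
        · subst hxv
          have h2 := hS.2 (Sum.inl x) (Set.mem_univ _) hx
          rwa [card_inter_v S h0] at h2
        · have h2 := hS.2 (Sum.inl x) (Set.mem_univ _) hx
          rwa [card_inter_ne x S hxv] at h2
      have hg := gammaK_le hdom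
      omega
  -- (4) alphaK T ≤ alphaK T' + 2
  have bound4 : alphaK T 2 Set.univ ≤ alphaK T' 2 Set.univ + 2 := by
    obtain ⟨S, hS, hcard⟩ := exists_alphaK T 2
    have hdecomp := ncard_sum_decomp S
    have hind : IsKIndOn T' 2 Set.univ (Sum.inl ⁻¹' S) := by
      refine ⟨Set.subset_univ _, fun x hx => ?_⟩
      have h1 := hS.2 (Sum.inl x) hx
      calc (T'.neighborSet x ∩ Sum.inl ⁻¹' S).ncard
          = (Sum.inl '' (T'.neighborSet x ∩ Sum.inl ⁻¹' S)).ncard := (cardIm _).symm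
        _ ≤ (T.neighborSet (Sum.inl x) ∩ S).ncard :=
            Set.ncard_le_ncard (inter_sup x S) (Set.toFinite _)
        _ ≤ 1 := h1
    have hle := le_alphaK hind
    have hnotall : ¬((Sum.inr 0 : V ⊕ Fin 3) ∈ S ∧ (Sum.inr 1 : V ⊕ Fin 3) ∈ S ∧
        (Sum.inr 2 : V ⊕ Fin 3) ∈ S) := by
      rintro ⟨ha0, ha1, ha2⟩
      have h1 := hS.2 (Sum.inr 1) ha1
      have hsub : ({Sum.inr 0, Sum.inr 2} : Set (V ⊕ Fin 3)) ⊆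
          T.neighborSet (Sum.inr 1) ∩ S := by
        rintro w (rfl | rfl)
        · exact ⟨by rw [N1]; exact Or.inl rfl, ha0⟩
        · exact ⟨by rw [N1]; exact Or.inr rfl, ha2⟩
      have := Set.ncard_le_ncard hsub (Set.toFinite _)
      rw [Set.ncard_pair (by simp)] at this
      omega
    have h3 : (Sum.inr ⁻¹' S : Set (Fin 3)).ncard ≤ 2 := by
      by_contra hcon
      push_neg at hcon
      have huniv : (Sum.inr ⁻¹' S : Set (Fin 3)) = Set.univ := by
        refine Set.eq_of_subset_of_ncard_le (Set.subset_univ _) ?_ (Set.toFinite _)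
        rw [Set.ncard_univ]
        rw [Nat.card_eq_fintype_card, Fintype.card_fin]; omega
      exact hnotall ⟨by
          have : (0 : Fin 3) ∈ Sum.inr ⁻¹' S := by rw [huniv]; trivial
          exact this,
        by
          have : (1 : Fin 3) ∈ Sum.inr ⁻¹' S := by rw [huniv]; trivial
          exact this,
        by
          have : (2 : Fin 3) ∈ Sum.inr ⁻¹' S := by rw [huniv]; trivial
          exact this⟩
    omega
  refine ⟨le_antisymm bound1 bound3, le_antisymm bound4 bound2, ?_⟩
  have e1 := le_antisymm bound1 bound3
  have e2 := le_antisymm bound4 bound2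
  rw [e1, e2]
  push_cast
  ring
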